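/- The bisectors B₁ = B(p̃₀, G₁·p̃₀) and B₅ = B(p̃₀, G₂²·G₁·p̃₀) are disjoint: there is no z ∈ ℂ³ with ⟨z, z⟩ < 0, |⟨z, p̃₀⟩| = |⟨z, G₁·p̃₀⟩|, and |⟨z, p̃₀⟩| = |⟨z, G₂²·G₁·p̃₀⟩|. -/

import Mathlib

noncomputable section

open Matrix

/-- ω = i·√7 -/
def ω : ℂ := Complex.I * Real.sqrt 7

def G₁ : Matrix (Fin 3) (Fin 3) ℂ := !![1, 1, (-1-ω)/2; 0, 1, -1; 0, 0, 1]

def G₃ : Matrix (Fin 3) (Fin 3) ℂ := !![1, 0, 0; -1, 1, 0; (-1+ω)/2, 1, 1]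

def G₂ : Matrix (Fin 3) (Fin 3) ℂ := G₃ * G₁⁻¹ * G₃⁻¹ * G₁

/-- Hermitian form ⟨Z,W⟩ = Z₁·conj(W₃) + Z₂·conj(W₂) + Z₃·conj(W₁). -/
def herm (Z W : Fin 3 → ℂ) : ℂ :=
  Z 0 * (starRingEnd ℂ) (W 2) + Z 1 * (starRingEnd ℂ) (W 1) + Z 2 * (starRingEnd ℂ) (W 0)

def p₀ : Fin 3 → ℂ := ![1, -(3+ω)/4, -1]

lemma hω2 : ω^2 = -7 := by
  have h7 : ((Real.sqrt 7 : ℝ) : ℂ)^2 = 7 := by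
    rw [← Complex.ofReal_pow, Real.sq_sqrt (by norm_num)]; norm_num
  rw [ω, mul_pow, Complex.I_sq, h7]; ring

lemma hωc : (starRingEnd ℂ) ω = -ω := by
  rw [ω, _root_.map_mul, Complex.conj_I, Complex.conj_ofReal]; ring

def B1 : Matrix (Fin 3) (Fin 3) ℂ := !![1, -1, (-1+ω)/2; 0, 1, 1; 0, 0, 1]
def B3 : Matrix (Fin 3) (Fin 3) ℂ := !![1, 0, 0; 1, 1, 0; (-1-ω)/2, -1, 1]
def E2 : Matrix (Fin 3) (Fin 3) ℂ := !![2, (3-ω)/2, -1; (-3-ω)/2, -1, 0; -1, 0, 0]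

lemma hG1inv : G₁⁻¹ = B1 := by
  apply inv_eq_right_inv
  ext i j
  fin_cases i <;> fin_cases j <;>
    simp [G₁, B1, Matrix.mul_apply, Fin.sum_univ_three, Matrix.one_fin_three,
      Matrix.vecHead, Matrix.vecTail] <;> ring

lemma hG3inv : G₃⁻¹ = B3 := by
  apply inv_eq_right_inv
  ext i j
  fin_cases i <;> fin_cases j <;>
    simp [G₃, B3, Matrix.mul_apply, Fin.sum_univ_three, Matrix.one_fin_three,
      Matrix.vecHead, Matrix.vecTail] <;> ring

lemma hG2 : G₂ = E2 := by
  rw [G₂, hG1inv, hG3inv]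
  ext i j
  fin_cases i <;> fin_cases j <;>
    simp [G₃, B1, B3, G₁, E2, Matrix.mul_apply, Fin.sum_univ_three,
      Matrix.vecHead, Matrix.vecTail]
  · linear_combination (-1/4 : ℂ) * hω2
  · linear_combination (-1/4 : ℂ) * hω2
  · linear_combination (1/8 + ω/8) * hω2
  · linear_combination (1/4 : ℂ) * hω2
  · linear_combination (1/4 : ℂ) * hω2
  · linear_combination (1/8 - ω/8) * hω2
  · linear_combination (1/8 - ω/8) * hω2
  · linear_combination (-1/8 - ω/8) * hω2
  · linear_combination (7/16 + ω^2/16) * hω2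

lemma hq1 : G₁ *ᵥ p₀ = ![(3+ω)/4, (1-ω)/4, -1] := by
  funext i
  fin_cases i <;>
    simp [G₁, p₀, Matrix.mulVec, dotProduct, Fin.sum_univ_three,
      Matrix.vecHead, Matrix.vecTail] <;> ring

lemma hq2 : E2 *ᵥ ![(3+ω)/4, (1-ω)/4, -1] = ![2, (-1-ω)/2, (-3-ω)/4] := by
  funext i
  fin_cases i <;>
    simp [E2, Matrix.mulVec, dotProduct, Fin.sum_univ_three,
      Matrix.vecHead, Matrix.vecTail]
  · linear_combination (1/8 : ℂ) * hω2
  · linear_combination (-1/8 : ℂ) * hω2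
  · ring

lemma hq3 : E2 *ᵥ ![2, (-1-ω)/2, (-3-ω)/4] = ![(9-ω)/4, (-5-ω)/2, -2] := by
  funext i
  fin_cases i <;>
    simp [E2, Matrix.mulVec, dotProduct, Fin.sum_univ_three,
      Matrix.vecHead, Matrix.vecTail]
  · linear_combination (1/4 : ℂ) * hω2
  · ring

lemma hq5 : (G₂ ^ 2 * G₁) *ᵥ p₀ = ![(9-ω)/4, (-5-ω)/2, -2] := by
  rw [pow_two, Matrix.mul_assoc, ← Matrix.mulVec_mulVec, ← Matrix.mulVec_mulVec,
    hq1, hG2, hq2, hq3]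

/-- The bisectors B₁ = B(p₀, G₁ p₀) and B₅ = B(p₀, G₂² G₁ p₀) are disjoint. -/
theorem stmt14 :
    ¬ ∃ z : Fin 3 → ℂ, (∃ r : ℝ, r < 0 ∧ herm z z = (r : ℂ)) ∧
      ‖herm z p₀‖ = ‖herm z (G₁ *ᵥ p₀)‖ ∧
      ‖herm z p₀‖ = ‖herm z ((G₂ ^ 2 * G₁) *ᵥ p₀)‖ := by
  rintro ⟨z, ⟨r, hr, hzz⟩, h1, h5⟩
  rw [hq1] at h1
  rw [hq5] at h5
  set C := starRingEnd ℂ with hC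
  -- expansions of the three Hermitian products and their conjugates
  have ea : herm z p₀ = -(z 0) - (3-ω)/4 * z 1 + z 2 := by
    simp [herm, p₀, map_div₀, map_neg, map_add, _root_.map_one, map_ofNat, hωc, hC]
    ring
  have eca : C (herm z p₀)
      = -(C (z 0)) - (3+ω)/4 * C (z 1) + C (z 2) := by
    simp [herm, p₀, map_div₀, map_neg, map_add, _root_.map_mul, _root_.map_one,
      map_ofNat, hωc, hC]
    ring
  have eb : herm z ![(3+ω)/4, (1-ω)/4, -1]
      = -(z 0) + (1+ω)/4 * z 1 + (3-ω)/4 * z 2 := by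
    simp [herm, map_div₀, map_neg, map_add, map_sub, _root_.map_one, map_ofNat, hωc, hC]
    ring
  have ecb : C (herm z ![(3+ω)/4, (1-ω)/4, -1])
      = -(C (z 0)) + (1-ω)/4 * C (z 1) + (3+ω)/4 * C (z 2) := by
    simp [herm, map_div₀, map_neg, map_add, map_sub, _root_.map_mul, _root_.map_one,
      map_ofNat, hωc, hC]
    ring
  have ec : herm z ![(9-ω)/4, (-5-ω)/2, -2]
      = -2*(z 0) + (-5+ω)/2 * z 1 + (9+ω)/4 * z 2 := by
    simp [herm, map_div₀, map_neg, map_add, map_sub, _root_.map_one, map_ofNat, hωc, hC]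
    ring
  have ecc : C (herm z ![(9-ω)/4, (-5-ω)/2, -2])
      = -2*(C (z 0)) + (-5-ω)/2 * C (z 1) + (9-ω)/4 * C (z 2) := by
    simp [herm, map_div₀, map_neg, map_add, map_sub, _root_.map_mul, _root_.map_one,
      map_ofNat, hωc, hC]
    ring
  -- turn the absolute-value equalities into product equalities
  have hab : herm z p₀ * C (herm z p₀)
      = herm z ![(3+ω)/4, (1-ω)/4, -1] * C (herm z ![(3+ω)/4, (1-ω)/4, -1]) := by
    rw [hC, Complex.mul_conj, Complex.mul_conj, Complex.normSq_eq_norm_sq,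
      Complex.normSq_eq_norm_sq, h1]
  have hac : herm z p₀ * C (herm z p₀)
      = herm z ![(9-ω)/4, (-5-ω)/2, -2] * C (herm z ![(9-ω)/4, (-5-ω)/2, -2]) := by
    rw [hC, Complex.mul_conj, Complex.mul_conj, Complex.normSq_eq_norm_sq,
      Complex.normSq_eq_norm_sq, h5]
  rw [eca, ecb, ea, eb] at hab
  rw [eca, ecc, ea, ec] at hac
  have hzz' : z 0 * C (z 2) + z 1 * C (z 1) + z 2 * C (z 0) = (r : ℂ) := hzz
  -- the sum-of-squares linear forms
  set l1 : ℂ := z 0 + (13/12 - ω/4) * z 1 + (-3/4 - ω/12) * z 2 with hl1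
  set l2 : ℂ := z 1 + (-9/16 - ω/4) * z 2 with hl2
  have ecl1 : C l1 = C (z 0) + (13/12 + ω/4) * C (z 1) + (-3/4 + ω/12) * C (z 2) := by
    simp [hl1, map_div₀, map_neg, map_add, map_sub, _root_.map_mul, _root_.map_one,
      map_ofNat, hωc, hC]
    ring
  have ecl2 : C l2 = C (z 1) + (-9/16 + ω/4) * C (z 2) := by
    simp only [hl2, map_div₀, map_neg, map_add, map_sub, _root_.map_mul, _root_.map_one,
      map_ofNat, hωc, hC]
    ring
  have key : (r : ℂ) = 3 * (l1 * C l1) + 8/3 * (l2 * C l2) + 21/32 * (z 2 * C (z 2)) := by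
    rw [ecl1, ecl2, hl1, hl2]
    linear_combination (-1 : ℂ) * hzz' + hab + hac + (1/16 * z 2 * C (z 2)) * hω2
  rw [hC] at key
  rw [Complex.mul_conj, Complex.mul_conj, Complex.mul_conj] at key
  have keyR : r = 3 * Complex.normSq l1 + 8/3 * Complex.normSq l2
      + 21/32 * Complex.normSq (z 2) := by
    apply Complex.ofReal_injective
    push_cast
    exact key
  have n1 := Complex.normSq_nonneg l1
  have n2 := Complex.normSq_nonneg l2
  have n3 := Complex.normSq_nonneg (z 2)
  linarith
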